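/- arXiv:1712.08106 — 11 statements merged into one kernel-verified Lean document; each statement's English description precedes it below -/
import Mathlib

section
/- Let k ≠ 0 be a real constant and let u, w : ℝ² → ℝ be twice continuously differentiable functions of (x₁, x₂) satisfying the Bäcklund relations ∂u/∂x₂ = k⁻¹ sin(u − w) and ∂u/∂x₁ = ∂w/∂x₁ + k sin u at every point. Then w satisfies the sine-Gordon equation ∂²w/∂x₁∂x₂ = sin w at every point. -/
/-- Partial derivative with respect to the first variable. -/
noncomputable def pd1 (u : ℝ × ℝ → ℝ) (p : ℝ × ℝ) : ℝ := deriv (fun x₁ => u (x₁, p.2)) p.1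

/-- Partial derivative with respect to the second variable. -/
noncomputable def pd2 (u : ℝ × ℝ → ℝ) (p : ℝ × ℝ) : ℝ := deriv (fun x₂ => u (p.1, x₂)) p.2

lemma hasDerivAt_fst (f : ℝ × ℝ → ℝ) (hf : Differentiable ℝ f) (p : ℝ × ℝ) :
    HasDerivAt (fun x => f (x, p.2)) (fderiv ℝ f p ((1 : ℝ), (0 : ℝ))) p.1 := by
  have h := (hf (p.1, p.2)).hasFDerivAt.comp_hasDerivAt p.1
    ((hasDerivAt_id p.1).prodMk (hasDerivAt_const p.1 p.2))
  simpa [Function.comp_def] using h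

lemma hasDerivAt_snd (f : ℝ × ℝ → ℝ) (hf : Differentiable ℝ f) (p : ℝ × ℝ) :
    HasDerivAt (fun y => f (p.1, y)) (fderiv ℝ f p ((0 : ℝ), (1 : ℝ))) p.2 := by
  have h := (hf (p.1, p.2)).hasFDerivAt.comp_hasDerivAt p.2
    ((hasDerivAt_const p.2 p.1).prodMk (hasDerivAt_id p.2))
  simpa [Function.comp_def] using h

lemma pd1_eq (f : ℝ × ℝ → ℝ) (hf : Differentiable ℝ f) (p : ℝ × ℝ) :
    pd1 f p = fderiv ℝ f p ((1 : ℝ), (0 : ℝ)) := (hasDerivAt_fst f hf p).deriv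

lemma pd2_eq (f : ℝ × ℝ → ℝ) (hf : Differentiable ℝ f) (p : ℝ × ℝ) :
    pd2 f p = fderiv ℝ f p ((0 : ℝ), (1 : ℝ)) := (hasDerivAt_snd f hf p).deriv

lemma hasDerivAt_fderiv_snd (f : ℝ × ℝ → ℝ) (hf : ContDiff ℝ 2 f) (p : ℝ × ℝ)
    (v : ℝ × ℝ) :
    HasDerivAt (fun y => fderiv ℝ f (p.1, y) v)
      (fderiv ℝ (fderiv ℝ f) p ((0 : ℝ), (1 : ℝ)) v) p.2 := by
  have hf' : ContDiff ℝ 1 (fderiv ℝ f) := hf.fderiv_right (m := 1) (by norm_num)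
  have hD : HasDerivAt (fun y => fderiv ℝ f (p.1, y))
      (fderiv ℝ (fderiv ℝ f) p ((0 : ℝ), (1 : ℝ))) p.2 := by
    have h := ((hf'.differentiable (by norm_num)) (p.1, p.2)).hasFDerivAt.comp_hasDerivAt p.2
      ((hasDerivAt_const p.2 p.1).prodMk (hasDerivAt_id p.2))
    simpa [Function.comp_def] using h
  have h2 := hD.clm_apply (hasDerivAt_const p.2 v)
  simpa using h2

lemma hasDerivAt_fderiv_fst (f : ℝ × ℝ → ℝ) (hf : ContDiff ℝ 2 f) (p : ℝ × ℝ)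
    (v : ℝ × ℝ) :
    HasDerivAt (fun x => fderiv ℝ f (x, p.2) v)
      (fderiv ℝ (fderiv ℝ f) p ((1 : ℝ), (0 : ℝ)) v) p.1 := by
  have hf' : ContDiff ℝ 1 (fderiv ℝ f) := hf.fderiv_right (m := 1) (by norm_num)
  have hD : HasDerivAt (fun x => fderiv ℝ f (x, p.2))
      (fderiv ℝ (fderiv ℝ f) p ((1 : ℝ), (0 : ℝ))) p.1 := by
    have h := ((hf'.differentiable (by norm_num)) (p.1, p.2)).hasFDerivAt.comp_hasDerivAt p.1
      ((hasDerivAt_id p.1).prodMk (hasDerivAt_const p.1 p.2))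
    simpa [Function.comp_def] using h
  have h2 := hD.clm_apply (hasDerivAt_const p.1 v)
  simpa using h2

/-- If `u`, `w` satisfy the Bäcklund relations
`u_{x₂} = k⁻¹ sin(u − w)`, `u_{x₁} = w_{x₁} + k sin u` with `k ≠ 0`,
then `w` satisfies the sine-Gordon equation `w_{x₁x₂} = sin w`. -/
theorem backlund_implies_sine_gordon (k : ℝ) (hk : k ≠ 0)
    (u w : ℝ × ℝ → ℝ) (hu : ContDiff ℝ 2 u) (hw : ContDiff ℝ 2 w)
    (h1 : ∀ p : ℝ × ℝ, pd2 u p = k⁻¹ * Real.sin (u p - w p))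
    (h2 : ∀ p : ℝ × ℝ, pd1 u p = pd1 w p + k * Real.sin (u p)) :
    ∀ p : ℝ × ℝ, pd2 (pd1 w) p = Real.sin (w p) := by
  intro p
  have hud : Differentiable ℝ u := hu.differentiable (by norm_num)
  have hwd : Differentiable ℝ w := hw.differentiable (by norm_num)
  -- second fderiv of u, symmetric
  have hsymm : fderiv ℝ (fderiv ℝ u) p ((0 : ℝ), (1 : ℝ)) ((1 : ℝ), (0 : ℝ)) =
      fderiv ℝ (fderiv ℝ u) p ((1 : ℝ), (0 : ℝ)) ((0 : ℝ), (1 : ℝ)) :=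
    (hu.contDiffAt.isSymmSndFDerivAt (by norm_num)) _ _
  -- derivative of y ↦ u (p.1, y) and x ↦ u (x, p.2), same for w
  have hu2 := hasDerivAt_snd u hud p
  have hw2 := hasDerivAt_snd w hwd p
  have huw1x : ∀ x : ℝ, HasDerivAt (fun x' => u (x', p.2) - w (x', p.2))
      (fderiv ℝ u (x, p.2) (1, 0) - fderiv ℝ w (x, p.2) (1, 0)) x := fun x =>
    (hasDerivAt_fst u hud (x, p.2)).sub (hasDerivAt_fst w hwd (x, p.2))
  -- compute pd2 (pd1 w) p
  -- pd1 w q = pd1 u q - k * sin (u q)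
  have key : ∀ q, pd1 w q = fderiv ℝ u q (1, 0) - k * Real.sin (u q) := by
    intro q
    have := h2 q
    rw [pd1_eq u hud q] at this
    linarith
  have hDsin : HasDerivAt (fun y => k * Real.sin (u (p.1, y)))
      (k * (Real.cos (u p) * fderiv ℝ u p (0, 1))) p.2 := by
    have := (hu2.sin).const_mul k
    simpa using this
  have hD1 : HasDerivAt (fun y => pd1 w (p.1, y))
      (fderiv ℝ (fderiv ℝ u) p ((0 : ℝ), (1 : ℝ)) ((1 : ℝ), (0 : ℝ)) -
        k * (Real.cos (u p) * fderiv ℝ u p (0, 1))) p.2 := by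
    have h := (hasDerivAt_fderiv_snd u hu p (1, 0)).sub hDsin
    refine h.congr_of_eventuallyEq ?_
    filter_upwards with y using key (p.1, y)
  have hpd21w : pd2 (pd1 w) p =
      fderiv ℝ (fderiv ℝ u) p ((0 : ℝ), (1 : ℝ)) ((1 : ℝ), (0 : ℝ)) -
        k * (Real.cos (u p) * fderiv ℝ u p (0, 1)) := hD1.deriv
  -- compute pd1 (pd2 u) p two ways to get the mixed second derivative of u
  have key2 : ∀ q, fderiv ℝ u q ((0 : ℝ), (1 : ℝ)) = k⁻¹ * Real.sin (u q - w q) := by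
    intro q
    have := h1 q
    rw [pd2_eq u hud q] at this
    linarith
  have hD2 : HasDerivAt (fun x => fderiv ℝ u (x, p.2) ((0 : ℝ), (1 : ℝ)))
      (k⁻¹ * (Real.cos (u p - w p) *
        (fderiv ℝ u p (1, 0) - fderiv ℝ w p (1, 0)))) p.1 := by
    have h : HasDerivAt (fun x => k⁻¹ * Real.sin (u (x, p.2) - w (x, p.2)))
        (k⁻¹ * (Real.cos (u (p.1, p.2) - w (p.1, p.2)) *
          (fderiv ℝ u (p.1, p.2) (1, 0) - fderiv ℝ w (p.1, p.2) (1, 0)))) p.1 := by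
      have := ((huw1x p.1).sin).const_mul k⁻¹
      simpa using this
    have h' : HasDerivAt (fun x => k⁻¹ * Real.sin (u (x, p.2) - w (x, p.2)))
        (k⁻¹ * (Real.cos (u p - w p) *
          (fderiv ℝ u p (1, 0) - fderiv ℝ w p (1, 0)))) p.1 := by simpa using h
    exact h'.congr_of_eventuallyEq
      (Filter.Eventually.of_forall fun x => key2 (x, p.2))
  have hmix : fderiv ℝ (fderiv ℝ u) p ((1 : ℝ), (0 : ℝ)) ((0 : ℝ), (1 : ℝ)) =
      k⁻¹ * (Real.cos (u p - w p) * (fderiv ℝ u p (1, 0) - fderiv ℝ w p (1, 0))) := by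
    have := (hasDerivAt_fderiv_fst u hu p ((0 : ℝ), (1 : ℝ))).unique hD2
    exact this
  -- from h2: fderiv u p (1,0) - fderiv w p (1,0) = k * sin (u p)
  have hdiff : fderiv ℝ u p (1, 0) - fderiv ℝ w p (1, 0) = k * Real.sin (u p) := by
    have := h2 p
    rw [pd1_eq u hud p, pd1_eq w hwd p] at this
    linarith
  rw [hpd21w, hsymm, hmix, hdiff, key2 p]
  have hck : k⁻¹ * (Real.cos (u p - w p) * (k * Real.sin (u p))) =
      Real.cos (u p - w p) * Real.sin (u p) := by field_simp
  have hck2 : k * (Real.cos (u p) * (k⁻¹ * Real.sin (u p - w p))) =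
      Real.cos (u p) * Real.sin (u p - w p) := by field_simp
  rw [hck, hck2]
  have hs := Real.sin_sub (u p) (u p - w p)
  rw [show u p - (u p - w p) = w p by ring] at hs
  linarith
end

section
/- Let F, f, φ : ℝ → ℝ with f, φ continuously differentiable, and suppose f′(s)·φ(s) = F(s) and φ(s) + φ′(s)·f(s) = F(s) for all s ∈ ℝ. Let D ⊆ ℝ² be an open set with x₁ ≠ 0 on D, and let u : D → ℝ be twice continuously differentiable satisfying the ansatz ∂u/∂x₁ = f(u)/x₁ and ∂u/∂x₂ = x₁·φ(u) at every point of D. Then u satisfies the nonlinear wave equation ∂²u/∂x₁∂x₂ = F(u) on D. -/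
/-- If `f, φ` solve the reduced system `f′φ = F`, `φ + φ′f = F`, and `u` satisfies
the ansatz `u_{x₁} = f(u)/x₁`, `u_{x₂} = x₁ φ(u)` on an open set `D` on which `x₁ ≠ 0`,
then `u` solves the nonlinear wave equation `u_{x₁x₂} = F(u)` on `D`. -/
theorem ansatz_reduces_nonlinear_wave (F f φ : ℝ → ℝ)
    (hf : ContDiff ℝ 1 f) (hφ : ContDiff ℝ 1 φ)
    (hsys1 : ∀ s : ℝ, deriv f s * φ s = F s)
    (hsys2 : ∀ s : ℝ, φ s + deriv φ s * f s = F s)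
    (D : Set (ℝ × ℝ)) (hD : IsOpen D) (hx : ∀ p ∈ D, p.1 ≠ 0)
    (u : ℝ × ℝ → ℝ) (hu : ContDiffOn ℝ 2 u D)
    (h1 : ∀ p ∈ D, pd1 u p = f (u p) / p.1)
    (h2 : ∀ p ∈ D, pd2 u p = p.1 * φ (u p)) :
    ∀ p ∈ D, pd2 (pd1 u) p = F (u p) := by
  intro p hp
  have hp1 : p.1 ≠ 0 := hx p hp
  set g : ℝ → ℝ := fun x₂ => u (p.1, x₂) with hg
  have hud : ∀ q ∈ D, DifferentiableAt ℝ u q := fun q hq =>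
    ((hu.differentiableOn (by norm_num)).differentiableAt (hD.mem_nhds hq))
  have hgd : DifferentiableAt ℝ g p.2 := by
    have : DifferentiableAt ℝ (fun x₂ : ℝ => ((p.1, x₂) : ℝ × ℝ)) p.2 := by
      apply DifferentiableAt.prodMk <;> simp [differentiableAt_const, differentiableAt_fun_id]
    exact (hud p hp).comp p.2 this
  have hev : (fun x₂ => pd1 u (p.1, x₂)) =ᶠ[nhds p.2] (fun x₂ => f (g x₂) / p.1) := by
    have hopen : IsOpen {x₂ : ℝ | (p.1, x₂) ∈ D} :=
      hD.preimage (by continuity : Continuous fun x₂ : ℝ => ((p.1, x₂) : ℝ × ℝ))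
    filter_upwards [hopen.mem_nhds (by exact hp : (p.1, p.2) ∈ D)] with x₂ hx₂
    exact h1 (p.1, x₂) hx₂
  have hderiv : pd2 (pd1 u) p = deriv (fun x₂ => f (g x₂) / p.1) p.2 := by
    unfold pd2
    exact hev.deriv_eq
  rw [hderiv, deriv_div_const]
  have hchain : deriv (fun x₂ => f (g x₂)) p.2 = deriv f (g p.2) * deriv g p.2 :=
    deriv_comp p.2 (hf.differentiable one_ne_zero _) hgd
  have hg2 : deriv g p.2 = p.1 * φ (u p) := h2 p hp
  rw [hchain, hg2]
  have : g p.2 = u p := by simp [hg]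
  rw [this]
  field_simp
  rw [← hsys1 (u p)]
end

section
/- Let α be a real constant, let A, B : ℝ → ℝ be differentiable, and let u : ℝ → ℝ be twice continuously differentiable and satisfy the ordinary differential equation u″(x) + α²u′(x) = 0 for all x. Define g(x) = A(u′(x) + α²u(x))·u(x) + B(u′(x) + α²u(x)). Then g is twice differentiable and satisfies g″(x) + α²g′(x) = 0 for all x. -/
/-- If `u` solves `u″ + α²u′ = 0` and `g = A(u′ + α²u)·u + B(u′ + α²u)` with `A, B`
differentiable, then `g` is twice differentiable and solves `g″ + α²g′ = 0`. -/
theorem characteristic_is_again_solution (α : ℝ) (A B : ℝ → ℝ)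
    (hA : Differentiable ℝ A) (hB : Differentiable ℝ B)
    (u : ℝ → ℝ) (hu : ContDiff ℝ 2 u)
    (hode : ∀ x : ℝ, deriv (deriv u) x + α ^ 2 * deriv u x = 0)
    (g : ℝ → ℝ)
    (hg : ∀ x : ℝ, g x = A (deriv u x + α ^ 2 * u x) * u x + B (deriv u x + α ^ 2 * u x)) :
    Differentiable ℝ g ∧ Differentiable ℝ (deriv g) ∧
      ∀ x : ℝ, deriv (deriv g) x + α ^ 2 * deriv g x = 0 := by
  have hu1 : Differentiable ℝ u := hu.differentiable two_ne_zero
  have hud : ContDiff ℝ 1 (deriv u) := by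
    exact ((contDiff_succ_iff_deriv (n := 1)).mp hu).2.2
  have hud1 : Differentiable ℝ (deriv u) := hud.differentiable one_ne_zero
  -- the characteristic argument is constant
  set c : ℝ → ℝ := fun x => deriv u x + α ^ 2 * u x with hc
  have hcd : Differentiable ℝ c := hud1.add (differentiable_const _ |>.mul hu1)
  have hc0 : ∀ x, deriv c x = 0 := by
    intro x
    have : deriv c x = deriv (deriv u) x + α ^ 2 * deriv u x := by
      rw [hc]
      rw [deriv_fun_add (hud1 x) ((hu1 x).const_mul _),
        deriv_const_mul _ (hu1 x)]
    rw [this, hode x]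
  have hconst : ∀ x, c x = c 0 := by
    intro x
    have := is_const_of_deriv_eq_zero hcd hc0 x 0
    exact this
  have hgeq : g = fun x => A (c 0) * u x + B (c 0) := by
    funext x
    rw [hg x]
    have := hconst x
    simp only [hc] at this
    rw [this, mul_comm]
  have hgd : Differentiable ℝ g := by
    rw [hgeq]
    exact (differentiable_const _ |>.mul hu1).add (differentiable_const _)
  have hdg : deriv g = fun x => A (c 0) * deriv u x := by
    funext x
    rw [hgeq]
    rw [deriv_fun_add ((hu1 x).const_mul _) (differentiableAt_const _),
      deriv_const, deriv_const_mul _ (hu1 x), add_zero]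
  have hdgd : Differentiable ℝ (deriv g) := by
    rw [hdg]; exact differentiable_const _ |>.mul hud1
  refine ⟨hgd, hdgd, fun x => ?_⟩
  rw [hdg, deriv_const_mul _ (hud1 x)]
  linear_combination A (c 0) * hode x
end

section
/- Let α be a real constant, let h : ℝ → ℝ be any function, and let u : ℝ → ℝ be twice continuously differentiable and satisfy u″(x) + α²u′(x) = 0 for all x. Define g(x) = e^{−α²x}·h(u′(x) + α²u(x)). Then g is twice differentiable and satisfies g″(x) + α²g′(x) = 0 for all x. -/
/-- If `u` solves `u″ + α²u′ = 0` and `g(x) = e^{−α²x} h(u′(x) + α²u(x))` with `h` an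
arbitrary function, then `g` is twice differentiable and solves `g″ + α²g′ = 0`. -/
theorem exponential_characteristic_is_again_solution (α : ℝ) (h : ℝ → ℝ)
    (u : ℝ → ℝ) (hu : ContDiff ℝ 2 u)
    (hode : ∀ x : ℝ, deriv (deriv u) x + α ^ 2 * deriv u x = 0)
    (g : ℝ → ℝ)
    (hg : ∀ x : ℝ, g x = Real.exp (-α ^ 2 * x) * h (deriv u x + α ^ 2 * u x)) :
    Differentiable ℝ g ∧ Differentiable ℝ (deriv g) ∧
      ∀ x : ℝ, deriv (deriv g) x + α ^ 2 * deriv g x = 0 := by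
  have hd1 : Differentiable ℝ u := hu.differentiable (by norm_num)
  have h2 : ContDiff ℝ 1 (deriv u) := by
    have hu' : ContDiff ℝ ((1 : ℕ) + 1) u := by exact_mod_cast hu
    exact (contDiff_succ_iff_deriv.mp hu').2.2
  have hd2 : Differentiable ℝ (deriv u) := h2.differentiable (by norm_num)
  -- the characteristic argument u' + α²u is constant
  have hw : ∀ x : ℝ, deriv u x + α ^ 2 * u x = deriv u 0 + α ^ 2 * u 0 := by
    intro x
    apply is_const_of_deriv_eq_zero (f := fun x => deriv u x + α ^ 2 * u x)
    · exact hd2.add (hd1.const_mul _)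
    · intro y
      rw [deriv_fun_add (hd2 y) ((hd1 y).const_mul _), deriv_const_mul _ (hd1 y)]
      exact hode y
  set c : ℝ := h (deriv u 0 + α ^ 2 * u 0) with hc
  have geq : g = fun x => Real.exp (-α ^ 2 * x) * c := funext fun x => by
    rw [hg x, hw x]
  have hexp : ∀ x : ℝ, HasDerivAt (fun y => Real.exp (-α ^ 2 * y) * c)
      (-α ^ 2 * (Real.exp (-α ^ 2 * x) * c)) x := by
    intro x
    have h1 : HasDerivAt (fun y : ℝ => -α ^ 2 * y) (-α ^ 2) x := by
      simpa using (hasDerivAt_id x).const_mul (-α ^ 2)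
    have h2 := ((Real.hasDerivAt_exp (-α ^ 2 * x)).comp x h1).mul_const c
    exact h2.congr_deriv (by ring)
  have hgd : ∀ x : ℝ, HasDerivAt g (-α ^ 2 * (Real.exp (-α ^ 2 * x) * c)) x := by
    intro x; rw [geq]; exact hexp x
  have hderiv : deriv g = fun x => -α ^ 2 * (Real.exp (-α ^ 2 * x) * c) :=
    funext fun x => (hgd x).deriv
  have hgd2 : ∀ x : ℝ, HasDerivAt (deriv g)
      (-α ^ 2 * (-α ^ 2 * (Real.exp (-α ^ 2 * x) * c))) x := by
    intro x; rw [hderiv]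
    have := (hexp x).const_mul (-α ^ 2)
    convert this using 1
  refine ⟨fun x => (hgd x).differentiableAt, fun x => (hgd2 x).differentiableAt, fun x => ?_⟩
  rw [(hgd2 x).deriv, (hgd x).deriv]
  ring
end

section
/- Let α be a real constant, let F : ℝ → ℝ be twice continuously differentiable, and let u : ℝ² → ℝ be four times continuously differentiable in (x₁, x₂) and satisfy ∂²u/∂x₁² + α²·∂u/∂x₁ = 0 at every point. Define g(x₁, x₂) = ∂²u/∂x₁∂x₂ − (∂u/∂x₁)·F(∂u/∂x₁ + α²u). Then ∂²g/∂x₁² + α²·∂g/∂x₁ = 0 at every point. -/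
/-- Lie–Bäcklund symmetry: if `u` satisfies `u_{x₁x₁} + α²u_{x₁} = 0` everywhere, then the
characteristic `g = u_{x₁x₂} − u_{x₁}·F(u_{x₁} + α²u)` satisfies `g_{x₁x₁} + α²g_{x₁} = 0`. -/
theorem lie_backlund_characteristic (α : ℝ) (F : ℝ → ℝ) (hF : ContDiff ℝ 2 F)
    (u : ℝ × ℝ → ℝ) (hu : ContDiff ℝ 4 u)
    (hode : ∀ p : ℝ × ℝ, pd1 (pd1 u) p + α ^ 2 * pd1 u p = 0)
    (g : ℝ × ℝ → ℝ)
    (hg : ∀ p : ℝ × ℝ, g p = pd2 (pd1 u) p - pd1 u p * F (pd1 u p + α ^ 2 * u p)) :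
    ∀ p : ℝ × ℝ, pd1 (pd1 g) p + α ^ 2 * pd1 g p = 0 := by
  -- smoothness of the x₁-slices
  have hs : ∀ b : ℝ, ContDiff ℝ 4 (fun x => u (x, b)) := fun b =>
    hu.comp (contDiff_id.prodMk contDiff_const)
  have hd : ∀ b : ℝ, Differentiable ℝ (deriv (fun x => u (x, b))) := by
    intro b
    have h : ContDiff ℝ ((3 : ℕ∞) + 1) (fun x => u (x, b)) := by norm_num; exact hs b
    exact ((contDiff_succ_iff_deriv.mp h).2.2).differentiable (by norm_num)
  have hdu : ∀ b : ℝ, Differentiable ℝ (fun x => u (x, b)) := fun b =>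
    (hs b).differentiable (by norm_num)
  -- the ODE rewritten for slices
  have hode' : ∀ b y : ℝ, deriv (deriv (fun x => u (x, b))) y
      = -(α ^ 2) * deriv (fun x => u (x, b)) y := by
    intro b y
    have h := hode (y, b)
    simp only [pd1] at h
    linarith
  -- explicit exponential solution for u_{x₁}
  have key1 : ∀ b y : ℝ, deriv (fun x => u (x, b)) y
      = deriv (fun x => u (x, b)) 0 * Real.exp (-(α ^ 2) * y) := by
    intro b y
    set φ := deriv (fun x => u (x, b)) with hφ
    have hconst : ∀ z : ℝ, φ z * Real.exp (α ^ 2 * z) = φ 0 := by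
      intro z
      have hdiff : Differentiable ℝ (fun z => φ z * Real.exp (α ^ 2 * z)) :=
        (hd b).mul ((differentiable_id.const_mul (α ^ 2)).exp)
      have hzero : ∀ z : ℝ, deriv (fun z => φ z * Real.exp (α ^ 2 * z)) z = 0 := by
        intro z
        have h1 : HasDerivAt φ (deriv φ z) z := (hd b z).hasDerivAt
        have h2 : HasDerivAt (fun x => Real.exp (α ^ 2 * x))
            (Real.exp (α ^ 2 * z) * (α ^ 2 * 1)) z :=
          ((hasDerivAt_id z).const_mul (α ^ 2)).exp
        have h3 : deriv (fun z => φ z * Real.exp (α ^ 2 * z)) z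
            = deriv φ z * Real.exp (α ^ 2 * z) + φ z * (Real.exp (α ^ 2 * z) * (α ^ 2 * 1)) :=
          (h1.mul h2).deriv
        rw [h3, hφ, hode' b z]
        ring
      have := is_const_of_deriv_eq_zero hdiff hzero z 0
      simpa using this
    have h := hconst y
    have : φ 0 * Real.exp (-(α ^ 2) * y)
        = φ y * Real.exp (α ^ 2 * y) * Real.exp (-(α ^ 2) * y) := by rw [h]
    rw [this, mul_assoc, ← Real.exp_add]
    norm_num
  -- u_{x₁} + α²u is constant in x₁
  have key2 : ∀ b y : ℝ, deriv (fun x => u (x, b)) y + α ^ 2 * u (y, b)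
      = deriv (fun x => u (x, b)) 0 + α ^ 2 * u (0, b) := by
    intro b y
    have hdiff : Differentiable ℝ (fun y => deriv (fun x => u (x, b)) y + α ^ 2 * u (y, b)) :=
      (hd b).add ((hdu b).const_mul (α ^ 2))
    have hzero : ∀ z : ℝ,
        deriv (fun y => deriv (fun x => u (x, b)) y + α ^ 2 * u (y, b)) z = 0 := by
      intro z
      have h1 : HasDerivAt (fun y => deriv (fun x => u (x, b)) y)
          (deriv (deriv (fun x => u (x, b))) z) z := (hd b z).hasDerivAt
      have h2 : HasDerivAt (fun y => u (y, b)) (deriv (fun x => u (x, b)) z) z :=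
        (hdu b z).hasDerivAt
      have h3 : deriv (fun y => deriv (fun x => u (x, b)) y + α ^ 2 * u (y, b)) z
          = deriv (deriv fun x => u (x, b)) z + α ^ 2 * deriv (fun x => u (x, b)) z :=
        (h1.add (h2.const_mul (α ^ 2))).deriv
      rw [h3, hode' b z]
      ring
    exact is_const_of_deriv_eq_zero hdiff hzero y 0
  -- explicit form of g
  have key3 : ∀ b y : ℝ, g (y, b) = Real.exp (-(α ^ 2) * y) * g (0, b) := by
    intro b y
    rw [hg (y, b), hg (0, b)]
    simp only [pd1, pd2]
    rw [key2 b y]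
    have h2 : (fun x₂ => deriv (fun x₁ => u (x₁, x₂)) y)
        = fun x₂ => deriv (fun x₁ => u (x₁, x₂)) 0 * Real.exp (-(α ^ 2) * y) :=
      funext fun t => key1 t y
    rw [h2, deriv_mul_const_field, key1 b y]
    ring
  -- conclude
  rintro ⟨a, b⟩
  have hpd1 : ∀ x : ℝ, pd1 g (x, b)
      = Real.exp (-(α ^ 2) * x) * (-(α ^ 2) * g (0, b)) := by
    intro x
    show deriv (fun x₁ => g (x₁, b)) x = _
    have hfun : (fun x₁ => g (x₁, b)) = fun x₁ => Real.exp (-(α ^ 2) * x₁) * g (0, b) :=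
      funext fun z => key3 b z
    rw [hfun]
    have h := ((((hasDerivAt_id x).const_mul (-(α ^ 2))).exp).mul_const (g (0, b))).deriv
    simp only [id_eq, mul_one] at h; rw [h]; ring
  have hpd11 : pd1 (pd1 g) (a, b)
      = Real.exp (-(α ^ 2) * a) * (-(α ^ 2) * (-(α ^ 2) * g (0, b))) := by
    show deriv (fun x₁ => pd1 g (x₁, b)) a = _
    have hfun : (fun x₁ => pd1 g (x₁, b))
        = fun x₁ => Real.exp (-(α ^ 2) * x₁) * (-(α ^ 2) * g (0, b)) :=
      funext fun z => hpd1 z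
    rw [hfun]
    have h := ((((hasDerivAt_id a).const_mul (-(α ^ 2))).exp).mul_const
      (-(α ^ 2) * g (0, b))).deriv
    simp only [id_eq, mul_one] at h; rw [h]; ring
  rw [hpd11, hpd1 a]
  ring
end

section
/- Let α ≠ 0 and k be real constants, let F, A, B, h : ℝ → ℝ, and let φ₁, φ₂ : ℝ → ℝ be continuously differentiable and satisfy for all x₂ the reduced system A(α²φ₁)φ₁ + B(α²φ₁) + kφ₁′ = 0 and −α²φ₂′ = −α²φ₂F(α²φ₁) + A(α²φ₁)φ₂ + kφ₂′ + h(α²φ₁). Then u(x₁, x₂) = φ₁(x₂) + e^{−α²x₁}φ₂(x₂) satisfies the partial differential equation ∂²u/∂x₁∂x₂ = (∂u/∂x₁)·F(∂u/∂x₁ + α²u) + A(∂u/∂x₁ + α²u)·u + B(∂u/∂x₁ + α²u) + k·∂u/∂x₂ + e^{−α²x₁}·h(∂u/∂x₁ + α²u) at every point (x₁, x₂) ∈ ℝ². -/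
lemma hasDerivAt_exp_mul_const (c x d : ℝ) :
    HasDerivAt (fun y : ℝ => Real.exp (c * y) * d) (c * Real.exp (c * x) * d) x := by
  have h1 : HasDerivAt (fun y : ℝ => c * y) c x := by
    simpa using (hasDerivAt_id x).const_mul c
  have h2 := (Real.hasDerivAt_exp (c * x)).comp x h1
  simpa [mul_comm, mul_assoc] using h2.mul_const d

/-- If `φ₁, φ₂` solve the reduced system, then the ansatz
`u = φ₁(x₂) + e^{−α²x₁}φ₂(x₂)` solves the wave-type equation
`u_{x₁x₂} = u_{x₁}F(u_{x₁}+α²u) + A(u_{x₁}+α²u)u + B(u_{x₁}+α²u) + ku_{x₂}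
 + e^{−α²x₁}h(u_{x₁}+α²u)`. -/
theorem reduced_system_implies_pde (α k : ℝ) (hα : α ≠ 0) (F A B h : ℝ → ℝ)
    (φ₁ φ₂ : ℝ → ℝ) (hφ₁ : ContDiff ℝ 1 φ₁) (hφ₂ : ContDiff ℝ 1 φ₂)
    (hred1 : ∀ x₂ : ℝ,
      A (α ^ 2 * φ₁ x₂) * φ₁ x₂ + B (α ^ 2 * φ₁ x₂) + k * deriv φ₁ x₂ = 0)
    (hred2 : ∀ x₂ : ℝ,
      -α ^ 2 * deriv φ₂ x₂ =
        -α ^ 2 * φ₂ x₂ * F (α ^ 2 * φ₁ x₂) + A (α ^ 2 * φ₁ x₂) * φ₂ x₂ +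
          k * deriv φ₂ x₂ + h (α ^ 2 * φ₁ x₂))
    (u : ℝ × ℝ → ℝ)
    (hu : ∀ p : ℝ × ℝ, u p = φ₁ p.2 + Real.exp (-α ^ 2 * p.1) * φ₂ p.2) :
    ∀ p : ℝ × ℝ,
      pd2 (pd1 u) p =
        pd1 u p * F (pd1 u p + α ^ 2 * u p) + A (pd1 u p + α ^ 2 * u p) * u p +
          B (pd1 u p + α ^ 2 * u p) + k * pd2 u p +
          Real.exp (-α ^ 2 * p.1) * h (pd1 u p + α ^ 2 * u p) := by
  have hd1 : Differentiable ℝ φ₁ := hφ₁.differentiable one_ne_zero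
  have hd2 : Differentiable ℝ φ₂ := hφ₂.differentiable one_ne_zero
  -- pd1 u as an explicit function
  have hpd1 : ∀ q : ℝ × ℝ, pd1 u q = -α ^ 2 * Real.exp (-α ^ 2 * q.1) * φ₂ q.2 := by
    intro q
    have hfun : (fun x₁ => u (x₁, q.2)) =
        fun x₁ => φ₁ q.2 + Real.exp (-α ^ 2 * x₁) * φ₂ q.2 := by
      funext x₁; exact hu (x₁, q.2)
    have hder : HasDerivAt (fun x₁ => φ₁ q.2 + Real.exp (-α ^ 2 * x₁) * φ₂ q.2)
        (-α ^ 2 * Real.exp (-α ^ 2 * q.1) * φ₂ q.2) q.1 :=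
      (hasDerivAt_exp_mul_const (-α ^ 2) q.1 (φ₂ q.2)).const_add (φ₁ q.2)
    rw [pd1, hfun, hder.deriv]
  intro p
  set e := Real.exp (-α ^ 2 * p.1) with he
  have hpd2u : pd2 u p = deriv φ₁ p.2 + e * deriv φ₂ p.2 := by
    have hfun : (fun x₂ => u (p.1, x₂)) = fun x₂ => φ₁ x₂ + e * φ₂ x₂ := by
      funext x₂; exact hu (p.1, x₂)
    rw [pd2, hfun, deriv_fun_add (hd1 p.2) ((hd2 p.2).const_mul e),
      deriv_const_mul e (hd2 p.2)]
  have hpd21 : pd2 (pd1 u) p = -α ^ 2 * e * deriv φ₂ p.2 := by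
    have hfun : (fun x₂ => pd1 u (p.1, x₂)) = fun x₂ => -α ^ 2 * e * φ₂ x₂ := by
      funext x₂; exact hpd1 (p.1, x₂)
    rw [pd2, hfun, deriv_const_mul _ (hd2 p.2)]
  have harg : pd1 u p + α ^ 2 * u p = α ^ 2 * φ₁ p.2 := by
    rw [hpd1 p, hu p]; ring
  rw [hpd21, hpd2u, harg, hpd1 p, hu p]
  have h1 := hred1 p.2
  have h2 := hred2 p.2
  nlinarith [h1, h2, Real.exp_pos (-α ^ 2 * p.1), sq_nonneg e,
    mul_self_nonneg e]
end

section
/- Let α ≠ 0 and k be real constants, let F, A, B, h : ℝ → ℝ, let φ₁, φ₂ : ℝ → ℝ be continuously differentiable, and suppose that u(x₁, x₂) = φ₁(x₂) + e^{−α²x₁}φ₂(x₂) satisfies at every point (x₁, x₂) ∈ ℝ² the equation ∂²u/∂x₁∂x₂ = (∂u/∂x₁)·F(∂u/∂x₁ + α²u) + A(∂u/∂x₁ + α²u)·u + B(∂u/∂x₁ + α²u) + k·∂u/∂x₂ + e^{−α²x₁}·h(∂u/∂x₁ + α²u). Then φ₁ and φ₂ satisfy for all x₂ the reduced system A(α²φ₁)φ₁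 + B(α²φ₁) + kφ₁′ = 0 and −α²φ₂′ = −α²φ₂F(α²φ₁) + A(α²φ₁)φ₂ + kφ₂′ + h(α²φ₁). -/
/-- If the ansatz `u = φ₁(x₂) + e^{−α²x₁}φ₂(x₂)` solves the wave-type equation
`u_{x₁x₂} = u_{x₁}F(u_{x₁}+α²u) + A(u_{x₁}+α²u)u + B(u_{x₁}+α²u) + ku_{x₂}
 + e^{−α²x₁}h(u_{x₁}+α²u)` everywhere, then `φ₁, φ₂` solve the reduced system. -/
theorem pde_implies_reduced_system (α k : ℝ) (hα : α ≠ 0) (F A B h : ℝ → ℝ)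
    (φ₁ φ₂ : ℝ → ℝ) (hφ₁ : ContDiff ℝ 1 φ₁) (hφ₂ : ContDiff ℝ 1 φ₂)
    (u : ℝ × ℝ → ℝ)
    (hu : ∀ p : ℝ × ℝ, u p = φ₁ p.2 + Real.exp (-α ^ 2 * p.1) * φ₂ p.2)
    (hpde : ∀ p : ℝ × ℝ,
      pd2 (pd1 u) p =
        pd1 u p * F (pd1 u p + α ^ 2 * u p) + A (pd1 u p + α ^ 2 * u p) * u p +
          B (pd1 u p + α ^ 2 * u p) + k * pd2 u p +
          Real.exp (-α ^ 2 * p.1) * h (pd1 u p + α ^ 2 * u p)) :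
    ∀ x₂ : ℝ,
      A (α ^ 2 * φ₁ x₂) * φ₁ x₂ + B (α ^ 2 * φ₁ x₂) + k * deriv φ₁ x₂ = 0 ∧
      -α ^ 2 * deriv φ₂ x₂ =
        -α ^ 2 * φ₂ x₂ * F (α ^ 2 * φ₁ x₂) + A (α ^ 2 * φ₁ x₂) * φ₂ x₂ +
          k * deriv φ₂ x₂ + h (α ^ 2 * φ₁ x₂) := by
  have dφ₁ := hφ₁.differentiable one_ne_zero
  have dφ₂ := hφ₂.differentiable one_ne_zero
  have hd1 : ∀ p : ℝ × ℝ, pd1 u p = -α ^ 2 * Real.exp (-α ^ 2 * p.1) * φ₂ p.2 := by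
    intro p
    have heq : (fun x₁ => u (x₁, p.2)) = fun x₁ => φ₁ p.2 + Real.exp (-α ^ 2 * x₁) * φ₂ p.2 := by
      funext x₁; exact hu (x₁, p.2)
    have h1 : HasDerivAt (fun x₁ : ℝ => Real.exp (-α ^ 2 * x₁))
        (Real.exp (-α ^ 2 * p.1) * (-α ^ 2 * 1)) p.1 :=
      ((hasDerivAt_id p.1).const_mul (-α ^ 2)).exp
    have h2 := (h1.mul_const (φ₂ p.2)).const_add (φ₁ p.2)
    rw [pd1, heq, h2.deriv]; ring
  have hd2 : ∀ p : ℝ × ℝ, pd2 u p = deriv φ₁ p.2 + Real.exp (-α ^ 2 * p.1) * deriv φ₂ p.2 := by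
    intro p
    have heq : (fun x₂ => u (p.1, x₂)) = fun x₂ => φ₁ x₂ + Real.exp (-α ^ 2 * p.1) * φ₂ x₂ := by
      funext x₂; exact hu (p.1, x₂)
    rw [pd2, heq, deriv_fun_add (dφ₁ p.2) ((dφ₂ p.2).const_mul _), deriv_const_mul _ (dφ₂ p.2)]
  have hd12 : ∀ p : ℝ × ℝ, pd2 (pd1 u) p = -α ^ 2 * Real.exp (-α ^ 2 * p.1) * deriv φ₂ p.2 := by
    intro p
    have heq : (fun x₂ => pd1 u (p.1, x₂)) = fun x₂ => -α ^ 2 * Real.exp (-α ^ 2 * p.1) * φ₂ x₂ := by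
      funext x₂; exact hd1 (p.1, x₂)
    rw [pd2, heq, deriv_const_mul _ (dφ₂ p.2)]
  intro x₂
  have main : ∀ x₁ : ℝ,
      -α ^ 2 * Real.exp (-α ^ 2 * x₁) * deriv φ₂ x₂ =
        -α ^ 2 * Real.exp (-α ^ 2 * x₁) * φ₂ x₂ * F (α ^ 2 * φ₁ x₂)
        + A (α ^ 2 * φ₁ x₂) * (φ₁ x₂ + Real.exp (-α ^ 2 * x₁) * φ₂ x₂)
        + B (α ^ 2 * φ₁ x₂) + k * (deriv φ₁ x₂ + Real.exp (-α ^ 2 * x₁) * deriv φ₂ x₂)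
        + Real.exp (-α ^ 2 * x₁) * h (α ^ 2 * φ₁ x₂) := by
    intro x₁
    have e := hpde (x₁, x₂)
    rw [hd12 (x₁, x₂), hd1 (x₁, x₂), hd2 (x₁, x₂), hu (x₁, x₂)] at e
    simp only at e
    rw [show -α ^ 2 * Real.exp (-α ^ 2 * x₁) * φ₂ x₂ +
        α ^ 2 * (φ₁ x₂ + Real.exp (-α ^ 2 * x₁) * φ₂ x₂) = α ^ 2 * φ₁ x₂ from by ring] at e
    exact e
  have e0 := main 0
  have e1 := main 1
  rw [show -α ^ 2 * (0:ℝ) = 0 from by ring, Real.exp_zero] at e0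
  set E := Real.exp (-α ^ 2 * 1) with hEdef
  have hE : E ≠ 1 := by
    rw [hEdef, Ne, Real.exp_eq_one_iff]
    intro hc
    exact (pow_ne_zero 2 hα) (by linarith [neg_eq_zero.mp (by linarith : -α ^ 2 = 0)])
  have key2 : (1 - E) * ((-α ^ 2 * deriv φ₂ x₂) -
      (-α ^ 2 * φ₂ x₂ * F (α ^ 2 * φ₁ x₂) + A (α ^ 2 * φ₁ x₂) * φ₂ x₂ +
        k * deriv φ₂ x₂ + h (α ^ 2 * φ₁ x₂))) = 0 := by
    linear_combination e0 - e1
  have h2 : -α ^ 2 * deriv φ₂ x₂ =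
      -α ^ 2 * φ₂ x₂ * F (α ^ 2 * φ₁ x₂) + A (α ^ 2 * φ₁ x₂) * φ₂ x₂ +
        k * deriv φ₂ x₂ + h (α ^ 2 * φ₁ x₂) := by
    rcases mul_eq_zero.mp key2 with hc | hc
    · exact absurd (by linarith : E = 1) hE
    · linarith
  refine ⟨?_, h2⟩
  linear_combination h2 - e0
end

section
/- Let α ≠ 0 be a real constant, C₁ a real constant, F, h : ℝ → ℝ continuous functions, φ₁ : ℝ → ℝ a continuously differentiable function, and let G, P : ℝ → ℝ be differentiable with G′(x₂) = F(α²φ₁(x₂)) and P′(x₂) = h(α²φ₁(x₂))·e^{−G(x₂)} for all x₂. Then the function u(x₁, x₂) = φ₁(x₂) + (C₁ − P(x₂)/α²)·exp(G(x₂) − α²x₁) satisfies ∂u/∂x₁ + α²u = α²φ₁(x₂) and the nonlinear wave equation ∂²u/∂x₁∂x₂ = (∂u/∂x₁)·F(∂u/∂x₁ + α²u) + e^{−α²x₁}·h(∂u/∂x₁ + α²u) at every point (x₁, x₂) ∈ ℝ². -/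
/-- For arbitrary smooth `φ₁`, the function
`u = φ₁(x₂) + (C₁ − P(x₂)/α²)·exp(G(x₂) − α²x₁)`, where `G′ = F(α²φ₁)` and
`P′ = h(α²φ₁)e^{−G}`, satisfies `u_{x₁} + α²u = α²φ₁(x₂)` and the nonlinear wave equation
`u_{x₁x₂} = u_{x₁}F(u_{x₁}+α²u) + e^{−α²x₁}h(u_{x₁}+α²u)`. -/
theorem solution_with_arbitrary_function (α : ℝ) (hα : α ≠ 0) (C₁ : ℝ)
    (F h : ℝ → ℝ) (hF : Continuous F) (hh : Continuous h)
    (φ₁ : ℝ → ℝ) (hφ₁ : ContDiff ℝ 1 φ₁)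
    (G P : ℝ → ℝ) (hG : Differentiable ℝ G) (hP : Differentiable ℝ P)
    (hG' : ∀ x₂ : ℝ, deriv G x₂ = F (α ^ 2 * φ₁ x₂))
    (hP' : ∀ x₂ : ℝ, deriv P x₂ = h (α ^ 2 * φ₁ x₂) * Real.exp (-G x₂))
    (u : ℝ × ℝ → ℝ)
    (hu : ∀ p : ℝ × ℝ,
      u p = φ₁ p.2 + (C₁ - P p.2 / α ^ 2) * Real.exp (G p.2 - α ^ 2 * p.1)) :
    ∀ p : ℝ × ℝ,
      pd1 u p + α ^ 2 * u p = α ^ 2 * φ₁ p.2 ∧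
      pd2 (pd1 u) p =
        pd1 u p * F (pd1 u p + α ^ 2 * u p) +
          Real.exp (-α ^ 2 * p.1) * h (pd1 u p + α ^ 2 * u p) := by
  have hpd1 : ∀ q : ℝ × ℝ,
      pd1 u q = -α ^ 2 * (C₁ - P q.2 / α ^ 2) * Real.exp (G q.2 - α ^ 2 * q.1) := by
    intro q
    have hfun : (fun x₁ => u (x₁, q.2)) =
        fun x₁ => φ₁ q.2 + (C₁ - P q.2 / α ^ 2) * Real.exp (G q.2 - α ^ 2 * x₁) := by
      funext x₁; exact hu (x₁, q.2)
    have hd : HasDerivAt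
        (fun x₁ => φ₁ q.2 + (C₁ - P q.2 / α ^ 2) * Real.exp (G q.2 - α ^ 2 * x₁))
        (-α ^ 2 * (C₁ - P q.2 / α ^ 2) * Real.exp (G q.2 - α ^ 2 * q.1)) q.1 := by
      have h1 : HasDerivAt (fun x₁ : ℝ => G q.2 - α ^ 2 * x₁) (-α ^ 2) q.1 := by
        simpa using ((hasDerivAt_id q.1).const_mul (α ^ 2)).const_sub (G q.2)
      have h2 := (h1.exp).const_mul (C₁ - P q.2 / α ^ 2)
      have := h2.const_add (φ₁ q.2)
      exact this.congr_deriv (by ring)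
    rw [pd1, hfun, hd.deriv]
  intro p
  have h1 : pd1 u p + α ^ 2 * u p = α ^ 2 * φ₁ p.2 := by
    rw [hpd1 p, hu p]; ring
  refine ⟨h1, ?_⟩
  have hfun2 : (fun x₂ => pd1 u (p.1, x₂)) =
      fun x₂ => -α ^ 2 * (C₁ - P x₂ / α ^ 2) * Real.exp (G x₂ - α ^ 2 * p.1) := by
    funext x₂; exact hpd1 (p.1, x₂)
  have hd2 : HasDerivAt
      (fun x₂ => -α ^ 2 * (C₁ - P x₂ / α ^ 2) * Real.exp (G x₂ - α ^ 2 * p.1))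
      (deriv P p.2 * Real.exp (G p.2 - α ^ 2 * p.1) +
        -α ^ 2 * (C₁ - P p.2 / α ^ 2) *
          (Real.exp (G p.2 - α ^ 2 * p.1) * deriv G p.2)) p.2 := by
    have hPd : HasDerivAt (fun x₂ => -α ^ 2 * (C₁ - P x₂ / α ^ 2)) (deriv P p.2) p.2 := by
      have := (((hP p.2).hasDerivAt.div_const (α ^ 2)).const_sub C₁).const_mul (-α ^ 2)
      exact this.congr_deriv (by field_simp)
    have hGd : HasDerivAt (fun x₂ => Real.exp (G x₂ - α ^ 2 * p.1))
        (Real.exp (G p.2 - α ^ 2 * p.1) * deriv G p.2) p.2 := by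
      have := ((hG p.2).hasDerivAt.sub_const (α ^ 2 * p.1)).exp
      simpa [mul_comm] using this
    exact hPd.mul hGd
  have key : pd2 (pd1 u) p =
      deriv P p.2 * Real.exp (G p.2 - α ^ 2 * p.1) +
        -α ^ 2 * (C₁ - P p.2 / α ^ 2) *
          (Real.exp (G p.2 - α ^ 2 * p.1) * deriv G p.2) := by
    rw [pd2, hfun2, hd2.deriv]
  rw [key, h1, hpd1 p, hP' p.2, hG' p.2]
  have hexp : Real.exp (-G p.2) * Real.exp (G p.2 - α ^ 2 * p.1) =
      Real.exp (-α ^ 2 * p.1) := by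
    rw [← Real.exp_add]; ring_nf
  calc h (α ^ 2 * φ₁ p.2) * Real.exp (-G p.2) * Real.exp (G p.2 - α ^ 2 * p.1) +
        -α ^ 2 * (C₁ - P p.2 / α ^ 2) *
          (Real.exp (G p.2 - α ^ 2 * p.1) * F (α ^ 2 * φ₁ p.2))
      = h (α ^ 2 * φ₁ p.2) * (Real.exp (-G p.2) * Real.exp (G p.2 - α ^ 2 * p.1)) +
        -α ^ 2 * (C₁ - P p.2 / α ^ 2) *
          (Real.exp (G p.2 - α ^ 2 * p.1) * F (α ^ 2 * φ₁ p.2)) := by ring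
    _ = _ := by rw [hexp]; ring
end

section
/- Let r > 1 be a real number, set a = √(r(r+1)/(2(r−1))) and b = √(2(r+1)/(r(r−1))), let C₁ be a real constant, and let I = {ω ∈ ℝ : aω + C₁ > 0}. Then the functions φ₁(ω) = (aω + C₁)^{2/(r+1)} and φ₂(ω) = b·(aω + C₁)^{(1−r)/(r+1)} are differentiable on I and satisfy φ₂′(ω)·φ₁(ω)^r = −1 and (r/(r+1))·φ₂(ω) = φ₁′(ω) for all ω ∈ I. -/
/-- For `r > 1`, `a = √(r(r+1)/(2(r−1)))`, `b = √(2(r+1)/(r(r−1)))`, the functions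
`φ₁(ω) = (aω + C₁)^{2/(r+1)}` and `φ₂(ω) = b(aω + C₁)^{(1−r)/(r+1)}` are differentiable
on `{ω : aω + C₁ > 0}` and solve the reduced system `φ₂′φ₁^r = −1`, `(r/(r+1))φ₂ = φ₁′`. -/
theorem explicit_solution_of_reduced_system (r : ℝ) (hr : 1 < r) (C₁ : ℝ)
    (a b : ℝ)
    (ha : a = Real.sqrt (r * (r + 1) / (2 * (r - 1))))
    (hb : b = Real.sqrt (2 * (r + 1) / (r * (r - 1))))
    (I : Set ℝ) (hI : I = {ω : ℝ | 0 < a * ω + C₁})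
    (φ₁ φ₂ : ℝ → ℝ)
    (hφ₁ : ∀ ω : ℝ, φ₁ ω = (a * ω + C₁) ^ (2 / (r + 1)))
    (hφ₂ : ∀ ω : ℝ, φ₂ ω = b * (a * ω + C₁) ^ ((1 - r) / (r + 1))) :
    (∀ ω ∈ I, DifferentiableAt ℝ φ₁ ω ∧ DifferentiableAt ℝ φ₂ ω) ∧
      ∀ ω ∈ I, deriv φ₂ ω * φ₁ ω ^ r = -1 ∧ r / (r + 1) * φ₂ ω = deriv φ₁ ω := by
  have hr0 : (0:ℝ) < r := by linarith
  have hr1 : (0:ℝ) < r - 1 := by linarith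
  have hr2 : (0:ℝ) < r + 1 := by linarith
  have ha0 : 0 ≤ a := ha ▸ Real.sqrt_nonneg _
  have hb0 : 0 ≤ b := hb ▸ Real.sqrt_nonneg _
  have hab : a * b = (r + 1) / (r - 1) := by
    rw [ha, hb, ← Real.sqrt_mul (by positivity),
      show r * (r + 1) / (2 * (r - 1)) * (2 * (r + 1) / (r * (r - 1)))
        = ((r + 1) / (r - 1)) ^ 2 by field_simp]
    exact Real.sqrt_sq (by positivity)
  have hrb : r * b = 2 * a := by
    have h1 : (r * b) ^ 2 = (2 * a) ^ 2 := by
      rw [ha, hb, mul_pow, mul_pow, Real.sq_sqrt (by positivity),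
        Real.sq_sqrt (by positivity)]
      field_simp
    calc r * b = Real.sqrt ((r * b) ^ 2) := (Real.sqrt_sq (by positivity)).symm
      _ = Real.sqrt ((2 * a) ^ 2) := by rw [h1]
      _ = 2 * a := Real.sqrt_sq (by positivity)
  -- derivative helper
  have key : ∀ (p : ℝ) (ω : ℝ), 0 < a * ω + C₁ →
      HasDerivAt (fun ω => (a * ω + C₁) ^ p) (p * (a * ω + C₁) ^ (p - 1) * a) ω := by
    intro p ω hω
    have h1 : HasDerivAt (fun ω : ℝ => a * ω + C₁) a ω := by
      simpa using ((hasDerivAt_id ω).const_mul a).add_const C₁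
    exact (Real.hasDerivAt_rpow_const (Or.inl (ne_of_gt hω))).comp ω h1
  have hfun1 : φ₁ = fun ω => (a * ω + C₁) ^ (2 / (r + 1)) := funext hφ₁
  have hfun2 : φ₂ = fun ω => b * (a * ω + C₁) ^ ((1 - r) / (r + 1)) := funext hφ₂
  have hd1 : ∀ ω : ℝ, 0 < a * ω + C₁ →
      HasDerivAt φ₁ (2 / (r + 1) * (a * ω + C₁) ^ (2 / (r + 1) - 1) * a) ω := by
    intro ω hω; rw [hfun1]; exact key _ ω hω
  have hd2 : ∀ ω : ℝ, 0 < a * ω + C₁ →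
      HasDerivAt φ₂ (b * ((1 - r) / (r + 1) * (a * ω + C₁) ^ ((1 - r) / (r + 1) - 1) * a)) ω := by
    intro ω hω; rw [hfun2]; exact (key _ ω hω).const_mul b
  constructor
  · intro ω hω
    rw [hI] at hω
    exact ⟨(hd1 ω hω).differentiableAt, (hd2 ω hω).differentiableAt⟩
  · intro ω hω
    rw [hI] at hω
    set t := a * ω + C₁ with htdef
    have ht : 0 < t := hω
    have e1 : deriv φ₁ ω = 2 / (r + 1) * t ^ (2 / (r + 1) - 1) * a := (hd1 ω hω).deriv
    have e2 : deriv φ₂ ω = b * ((1 - r) / (r + 1) * t ^ ((1 - r) / (r + 1) - 1) * a) :=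
      (hd2 ω hω).deriv
    constructor
    · rw [e2, hφ₁, ← htdef, ← Real.rpow_mul ht.le]
      have hexp : (1 - r) / (r + 1) - 1 + 2 / (r + 1) * r = 0 := by
        field_simp; ring
      calc b * ((1 - r) / (r + 1) * t ^ ((1 - r) / (r + 1) - 1) * a) * t ^ (2 / (r + 1) * r)
          = a * b * ((1 - r) / (r + 1))
              * (t ^ ((1 - r) / (r + 1) - 1) * t ^ (2 / (r + 1) * r)) := by ring
        _ = a * b * ((1 - r) / (r + 1))
              * t ^ ((1 - r) / (r + 1) - 1 + 2 / (r + 1) * r) := by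
            rw [← Real.rpow_add ht]
        _ = -1 := by
            rw [hexp, Real.rpow_zero, hab, mul_one]
            field_simp
            ring
    · rw [e1, hφ₂, ← htdef]
      have he : (1 - r) / (r + 1) = 2 / (r + 1) - 1 := by
        field_simp
        ring
      rw [he]
      have h2 : r * b * t ^ (2 / (r + 1) - 1) = 2 * a * t ^ (2 / (r + 1) - 1) := by
        rw [hrb]
      linear_combination (1 / (r + 1)) * h2
end

section
/- Let r be a real number with r ≠ 0, 1, −1, let I ⊆ ℝ be an open interval, and let φ₁, φ₂ : I → ℝ be continuously differentiable with φ₁ > 0 on I, satisfying φ₂′(s)·φ₁(s)^r = −1 and (r/(r+1))·φ₂(s) = φ₁′(s) for all s ∈ I. Let D ⊆ {(x₁, x₂) ∈ ℝ² : x₁ > 0} be open and let v¹, v² : D → ℝ be continuously differentiable functions such that for every (x₁, x₂) ∈ D one has x₂ − v²(x₁,x₂) ∈ I, v¹(x₁,x₂) = x₁^{−1/(r+1)}·φ₁(x₂ − v²(x₁,x₂)), v²(x₁,x₂) = x₁^{r/(r+1)}·φ₂(x₂ − v²(x₁,x₂)), and 1 + x₁^{r/(r+1)}·φ₂′(x₂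 − v²(x₁,x₂)) ≠ 0. Then at every point of D: ∂v¹/∂x₂ = ∂v²/∂x₁, 1 − (v¹)^r ≠ 0, and ∂v²/∂x₂ = 1/(1 − (v¹)^r). -/
/-- If `φ₁ > 0`, `φ₂` solve the reduced system `φ₂′φ₁^r = −1`, `(r/(r+1))φ₂ = φ₁′` on an open
interval `I`, and `v¹, v²` satisfy the implicit ansatz
`v¹ = x₁^{−1/(r+1)}φ₁(x₂ − v²)`, `v² = x₁^{r/(r+1)}φ₂(x₂ − v²)` on an open set
`D ⊆ {x₁ > 0}` with `1 + x₁^{r/(r+1)}φ₂′(x₂ − v²) ≠ 0`, then `v¹, v²` solve the system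
`v¹_{x₂} = v²_{x₁}`, `v²_{x₂} = 1/(1 − (v¹)^r)` on `D`. -/
theorem implicit_ansatz_solves_system (r : ℝ)
    (hr0 : r ≠ 0) (hr1 : r ≠ 1) (hrm1 : r ≠ -1)
    (I : Set ℝ) (hIopen : IsOpen I) (hIconn : I.OrdConnected)
    (φ₁ φ₂ : ℝ → ℝ) (hφ₁ : ContDiffOn ℝ 1 φ₁ I) (hφ₂ : ContDiffOn ℝ 1 φ₂ I)
    (hφ₁pos : ∀ s ∈ I, 0 < φ₁ s)
    (hsys1 : ∀ s ∈ I, deriv φ₂ s * φ₁ s ^ r = -1)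
    (hsys2 : ∀ s ∈ I, r / (r + 1) * φ₂ s = deriv φ₁ s)
    (D : Set (ℝ × ℝ)) (hD : IsOpen D) (hDpos : ∀ p ∈ D, 0 < p.1)
    (v₁ v₂ : ℝ × ℝ → ℝ) (hv₁ : ContDiffOn ℝ 1 v₁ D) (hv₂ : ContDiffOn ℝ 1 v₂ D)
    (hmem : ∀ p ∈ D, p.2 - v₂ p ∈ I)
    (hans1 : ∀ p ∈ D, v₁ p = p.1 ^ (-(1 / (r + 1))) * φ₁ (p.2 - v₂ p))
    (hans2 : ∀ p ∈ D, v₂ p = p.1 ^ (r / (r + 1)) * φ₂ (p.2 - v₂ p))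
    (hden : ∀ p ∈ D, 1 + p.1 ^ (r / (r + 1)) * deriv φ₂ (p.2 - v₂ p) ≠ 0) :
    ∀ p ∈ D,
      pd2 v₁ p = pd1 v₂ p ∧
      1 - v₁ p ^ r ≠ 0 ∧
      pd2 v₂ p = 1 / (1 - v₁ p ^ r) := by
  intro p hp
  obtain ⟨a, b⟩ := p
  have ha : 0 < a := hDpos _ hp
  have hr1' : r + 1 ≠ 0 := fun h => hrm1 (by linarith)
  set s : ℝ := b - v₂ (a, b) with hs
  have hsI : s ∈ I := hmem _ hp
  -- derivatives of φ's
  have hdφ₁ : HasDerivAt φ₁ (deriv φ₁ s) s :=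
    ((hφ₁.differentiableOn one_ne_zero).differentiableAt (hIopen.mem_nhds hsI)).hasDerivAt
  have hdφ₂ : HasDerivAt φ₂ (deriv φ₂ s) s :=
    ((hφ₂.differentiableOn one_ne_zero).differentiableAt (hIopen.mem_nhds hsI)).hasDerivAt
  have hdv₂ : DifferentiableAt ℝ v₂ (a, b) :=
    (hv₂.differentiableOn one_ne_zero).differentiableAt (hD.mem_nhds hp)
  have hdf : DifferentiableAt ℝ (fun x₂ => v₂ (a, x₂)) b :=
    hdv₂.comp b ((differentiableAt_const a).prodMk differentiableAt_id)
  have hdg : DifferentiableAt ℝ (fun x₁ => v₂ (x₁, b)) a :=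
    hdv₂.comp a (differentiableAt_id.prodMk (differentiableAt_const b))
  set d2 : ℝ := deriv (fun x₂ => v₂ (a, x₂)) b with hd2def
  set d1 : ℝ := deriv (fun x₁ => v₂ (x₁, b)) a with hd1def
  have hf : HasDerivAt (fun x₂ => v₂ (a, x₂)) d2 b := hdf.hasDerivAt
  have hg : HasDerivAt (fun x₁ => v₂ (x₁, b)) d1 a := hdg.hasDerivAt
  -- neighborhood membership
  have hnb : ∀ᶠ x₂ in nhds b, (a, x₂) ∈ D :=
    ((continuous_const.prodMk continuous_id).continuousAt).preimage_mem_nhds (hD.mem_nhds hp)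
  have hna : ∀ᶠ x₁ in nhds a, (x₁, b) ∈ D :=
    ((continuous_id.prodMk continuous_const).continuousAt).preimage_mem_nhds (hD.mem_nhds hp)
  -- inner derivatives
  have hinner2 : HasDerivAt (fun x₂ => x₂ - v₂ (a, x₂)) (1 - d2) b :=
    (hasDerivAt_id b).sub hf
  have hinner1 : HasDerivAt (fun x₁ => b - v₂ (x₁, b)) (0 - d1) a :=
    (hasDerivAt_const a b).sub hg
  have hcomp2 : HasDerivAt (fun x₂ => φ₂ (x₂ - v₂ (a, x₂))) (deriv φ₂ s * (1 - d2)) b :=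
    hdφ₂.comp b hinner2
  have hcomp2' : HasDerivAt (fun x₂ => φ₁ (x₂ - v₂ (a, x₂))) (deriv φ₁ s * (1 - d2)) b :=
    hdφ₁.comp b hinner2
  have hcomp1 : HasDerivAt (fun x₁ => φ₂ (b - v₂ (x₁, b))) (deriv φ₂ s * (0 - d1)) a :=
    hdφ₂.comp a hinner1
  have hpow : HasDerivAt (fun x₁ : ℝ => x₁ ^ (r / (r + 1)))
      (r / (r + 1) * a ^ (r / (r + 1) - 1)) a :=
    Real.hasDerivAt_rpow_const (Or.inl ha.ne')
  -- equation for d2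
  have heq2 : (fun x₂ => v₂ (a, x₂)) =ᶠ[nhds b]
      fun x₂ => a ^ (r / (r + 1)) * φ₂ (x₂ - v₂ (a, x₂)) :=
    hnb.mono fun x hx => hans2 _ hx
  have heqd2 : d2 = a ^ (r / (r + 1)) * (deriv φ₂ s * (1 - d2)) :=
    hf.unique (((hcomp2.const_mul (a ^ (r / (r + 1))))).congr_of_eventuallyEq heq2)
  -- equation for d1
  have heq1 : (fun x₁ => v₂ (x₁, b)) =ᶠ[nhds a]
      fun x₁ => x₁ ^ (r / (r + 1)) * φ₂ (b - v₂ (x₁, b)) :=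
    hna.mono fun x hx => hans2 _ hx
  have heqd1 : d1 = r / (r + 1) * a ^ (r / (r + 1) - 1) * φ₂ s
      + a ^ (r / (r + 1)) * (deriv φ₂ s * (0 - d1)) :=
    hg.unique ((hpow.mul hcomp1).congr_of_eventuallyEq heq1)
  -- value of pd2 v₁
  have heq1' : (fun x₂ => v₁ (a, x₂)) =ᶠ[nhds b]
      fun x₂ => a ^ (-(1 / (r + 1))) * φ₁ (x₂ - v₂ (a, x₂)) :=
    hnb.mono fun x hx => hans1 _ hx
  have hpd2v₁ : deriv (fun x₂ => v₁ (a, x₂)) b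
      = a ^ (-(1 / (r + 1))) * (deriv φ₁ s * (1 - d2)) :=
    (((hcomp2'.const_mul (a ^ (-(1 / (r + 1)))))).congr_of_eventuallyEq heq1').deriv
  -- algebra
  set c : ℝ := a ^ (r / (r + 1)) * deriv φ₂ s with hc
  have hden' : 1 + c ≠ 0 := hden _ hp
  have hφ₂' : deriv φ₂ s ≠ 0 := by
    intro h0
    have h1 := hsys1 s hsI
    rw [h0, zero_mul] at h1
    norm_num at h1
  have hαpos : 0 < a ^ (r / (r + 1)) := Real.rpow_pos_of_pos ha _
  have hβpos : 0 < a ^ (-(1 / (r + 1))) := Real.rpow_pos_of_pos ha _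
  have hcne : c ≠ 0 := mul_ne_zero hαpos.ne' hφ₂'
  have hd2mul : d2 * (1 + c) = c := by rw [hc]; linear_combination heqd2
  have hexp : r / (r + 1) - 1 = -(1 / (r + 1)) := by field_simp; ring
  rw [hexp] at heqd1
  have hd1mul : d1 * (1 + c) = a ^ (-(1 / (r + 1))) * deriv φ₁ s := by
    rw [hc]; linear_combination heqd1 + a ^ (-(1 / (r + 1))) * hsys2 s hsI
  -- v₁ ^ r
  have hαβ : a ^ (r / (r + 1)) * (a ^ (-(1 / (r + 1)))) ^ r = 1 := by
    rw [← Real.rpow_mul ha.le, ← Real.rpow_add ha]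
    rw [show r / (r + 1) + -(1 / (r + 1)) * r = 0 by field_simp; ring, Real.rpow_zero]
  have hv₁r : v₁ (a, b) ^ r = (a ^ (-(1 / (r + 1)))) ^ r * φ₁ s ^ r := by
    rw [hans1 _ hp, Real.mul_rpow hβpos.le (hφ₁pos s hsI).le]
  have hcv : c * v₁ (a, b) ^ r = -1 := by
    rw [hv₁r, hc]
    calc a ^ (r / (r + 1)) * deriv φ₂ s * ((a ^ (-(1 / (r + 1)))) ^ r * φ₁ s ^ r)
        = (a ^ (r / (r + 1)) * (a ^ (-(1 / (r + 1)))) ^ r) * (deriv φ₂ s * φ₁ s ^ r) := by ring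
      _ = 1 * (-1) := by rw [hαβ, hsys1 s hsI]
      _ = -1 := by ring
  have hv1r' : v₁ (a, b) ^ r = -1 / c := by
    rw [eq_div_iff hcne]; linear_combination hcv
  have h1m : 1 - v₁ (a, b) ^ r = (1 + c) / c := by
    rw [hv1r']; field_simp; ring
  have hne : 1 - v₁ (a, b) ^ r ≠ 0 := by
    rw [h1m]; exact div_ne_zero hden' hcne
  refine ⟨?_, hne, ?_⟩
  · -- pd2 v₁ = pd1 v₂
    show deriv (fun x₂ => v₁ (a, x₂)) b = d1
    rw [hpd2v₁]
    have hd1 : d1 = a ^ (-(1 / (r + 1))) * deriv φ₁ s / (1 + c) :=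
      (eq_div_iff hden').mpr hd1mul
    have hd2 : d2 = c / (1 + c) := (eq_div_iff hden').mpr hd2mul
    rw [hd1, hd2]
    field_simp
    ring
  · -- pd2 v₂ = 1 / (1 - v₁^r)
    show d2 = 1 / (1 - v₁ (a, b) ^ r)
    rw [h1m, one_div_div]
    exact (eq_div_iff hden').mpr hd2mul
end

section
/- Let f, φ : ℝ → ℝ be continuously differentiable with f(s)·f′(s)·φ(s) = −1 for all s ∈ ℝ, let D ⊆ ℝ² be open, and let u : D → ℝ be twice continuously differentiable in (t, x) such that at every point (t, x) ∈ D, with ω = x·u_x(t,x) − 2u(t,x), one has u_x(t,x) = f(ω), u_t(t,x) = exp(φ(ω) + x/f(ω)), f(ω) ≠ 0, f′(ω) ≠ 0, and 1 − x·f′(ω) ≠ 0. Then at every point of D: u_{xx} = −f′(ω)·f(ω)/(1 − x·f′(ω)) ≠ 0 and u_t = exp(1/u_{xx}), i.e. u solves the nonlinear evolution equation u_t = e^{1/u_{xx}}. -/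
/-- Partial derivative with respect to the first variable (time `t`). -/
noncomputable def pdt (u : ℝ × ℝ → ℝ) (p : ℝ × ℝ) : ℝ := deriv (fun t => u (t, p.2)) p.1

/-- Partial derivative with respect to the second variable (space `x`). -/
noncomputable def pdx (u : ℝ × ℝ → ℝ) (p : ℝ × ℝ) : ℝ := deriv (fun x => u (p.1, x)) p.2

/-- If `f, φ` satisfy `f f′ φ = −1` and `u` satisfies the ansatz `u_x = f(ω)`,
`u_t = exp(φ(ω) + x/f(ω))` with `ω = x u_x − 2u` on an open set `D`, where
`f(ω) ≠ 0`, `f′(ω) ≠ 0` and `1 − x f′(ω) ≠ 0`, then on `D` one has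
`u_{xx} = −f′(ω)f(ω)/(1 − x f′(ω)) ≠ 0` and `u_t = exp(1/u_{xx})`. -/
theorem ansatz_solves_evolution_equation (f φ : ℝ → ℝ)
    (hf : ContDiff ℝ 1 f) (hφ : ContDiff ℝ 1 φ)
    (hode : ∀ s : ℝ, f s * deriv f s * φ s = -1)
    (D : Set (ℝ × ℝ)) (hD : IsOpen D)
    (u : ℝ × ℝ → ℝ) (hu : ContDiffOn ℝ 2 u D)
    (hux : ∀ p ∈ D, pdx u p = f (p.2 * pdx u p - 2 * u p))
    (hut : ∀ p ∈ D, pdt u p =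
      Real.exp (φ (p.2 * pdx u p - 2 * u p) + p.2 / f (p.2 * pdx u p - 2 * u p)))
    (hf0 : ∀ p ∈ D, f (p.2 * pdx u p - 2 * u p) ≠ 0)
    (hf'0 : ∀ p ∈ D, deriv f (p.2 * pdx u p - 2 * u p) ≠ 0)
    (hden : ∀ p ∈ D, 1 - p.2 * deriv f (p.2 * pdx u p - 2 * u p) ≠ 0) :
    ∀ p ∈ D,
      pdx (pdx u) p =
        -(deriv f (p.2 * pdx u p - 2 * u p) * f (p.2 * pdx u p - 2 * u p)) /
          (1 - p.2 * deriv f (p.2 * pdx u p - 2 * u p)) ∧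
      pdx (pdx u) p ≠ 0 ∧
      pdt u p = Real.exp (1 / pdx (pdx u) p) := by
  intro p hp
  -- F q = ∂u/∂x at q via fderiv
  set F : ℝ × ℝ → ℝ := fun q => fderiv ℝ u q (0, 1) with hFdef
  have hFc : ContDiffOn ℝ 1 F D :=
    (hu.fderiv_of_isOpen hD le_rfl).clm_apply contDiffOn_const
  -- slice derivative lemma
  have slice : ∀ q ∈ D, HasDerivAt (fun x => u (q.1, x)) (F q) q.2 := by
    intro q hq
    have hdu : DifferentiableAt ℝ u q :=
      (hu.differentiableOn (by norm_num)).differentiableAt (hD.mem_nhds hq)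
    have hline : HasDerivAt (fun x : ℝ => ((q.1 : ℝ), x)) ((0 : ℝ), (1 : ℝ)) q.2 :=
      (hasDerivAt_const _ _).prodMk (hasDerivAt_id _)
    have := hdu.hasFDerivAt.comp_hasDerivAt q.2 (by simpa using hline)
    exact this
  have hpx : ∀ q ∈ D, pdx u q = F q := fun q hq => (slice q hq).deriv
  -- the slice through p
  have hOpen : IsOpen {x : ℝ | (p.1, x) ∈ D} :=
    hD.preimage (by fun_prop : Continuous fun x : ℝ => (p.1, x))
  have hmem : {x : ℝ | (p.1, x) ∈ D} ∈ nhds p.2 := hOpen.mem_nhds hp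
  set G : ℝ → ℝ := fun x => F (p.1, x) with hGdef
  have hGdiff : DifferentiableAt ℝ G p.2 := by
    have hFd : DifferentiableAt ℝ F p :=
      (hFc.differentiableOn one_ne_zero).differentiableAt (hD.mem_nhds hp)
    have : DifferentiableAt ℝ (fun x : ℝ => ((p.1 : ℝ), x)) p.2 := by fun_prop
    have := hFd.comp p.2 (by simpa using this)
    exact this
  set A : ℝ := deriv G p.2 with hAdef
  have hG : HasDerivAt G A p.2 := hGdiff.hasDerivAt
  have heq : (fun x => pdx u (p.1, x)) =ᶠ[nhds p.2] G :=
    Filter.eventuallyEq_of_mem hmem fun x hx => hpx _ hx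
  have hA : pdx (pdx u) p = A := by
    simpa [pdx, hAdef] using heq.deriv_eq
  -- g = u along slice
  have hg : HasDerivAt (fun x => u (p.1, x)) (G p.2) p.2 := by
    have := slice p hp
    simpa [hGdef] using this
  -- ω and eventual identity G = f ∘ ω
  set w : ℝ → ℝ := fun x => x * G x - 2 * u (p.1, x) with hwdef
  have hw : HasDerivAt w (p.2 * A - G p.2) p.2 := by
    have h1 := ((hasDerivAt_id p.2).mul hG).sub (hg.const_mul 2)
    have h2 : HasDerivAt w (1 * G p.2 + p.2 * A - 2 * G p.2) p.2 := by exact h1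
    convert h2 using 1
    ring
  have hev : G =ᶠ[nhds p.2] fun x => f (w x) := by
    refine Filter.eventuallyEq_of_mem hmem fun x hx => ?_
    have h1 := hux (p.1, x) hx
    have h2 := hpx (p.1, x) hx
    simp only [hGdef, hwdef]
    rw [← h2]
    simpa using h1
  have hfd : HasDerivAt f (deriv f (w p.2)) (w p.2) :=
    (hf.differentiable one_ne_zero _).hasDerivAt
  have hcomp : HasDerivAt (fun x => f (w x)) (deriv f (w p.2) * (p.2 * A - G p.2)) p.2 :=
    hfd.comp p.2 hw
  have hG2 : HasDerivAt G (deriv f (w p.2) * (p.2 * A - G p.2)) p.2 :=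
    hcomp.congr_of_eventuallyEq hev
  have key : A = deriv f (w p.2) * (p.2 * A - G p.2) := hG.unique hG2
  -- identify w p.2 with ω at p
  have hGp : G p.2 = pdx u p := by
    rw [hGdef]; simp only []; rw [← hpx p hp]
  have hwp : w p.2 = p.2 * pdx u p - 2 * u p := by
    simp [hwdef, hGp]
  set a : ℝ := deriv f (p.2 * pdx u p - 2 * u p) with hadef
  set b : ℝ := f (p.2 * pdx u p - 2 * u p) with hbdef
  have ha : a ≠ 0 := hf'0 p hp
  have hb : b ≠ 0 := hf0 p hp
  have hd : 1 - p.2 * a ≠ 0 := hden p hp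
  have hGpb : G p.2 = b := by rw [hGp, hbdef]; exact hux p hp
  have key2 : A = a * (p.2 * A - b) := by rw [hwp, hGpb, ← hadef] at key; exact key
  have hAval : A = -(a * b) / (1 - p.2 * a) := by
    rw [eq_div_iff hd]
    linear_combination key2
  have hAne : A ≠ 0 := by
    rw [hAval]
    exact div_ne_zero (neg_ne_zero.mpr (mul_ne_zero ha hb)) hd
  refine ⟨by rw [hA, hAval], by rw [hA]; exact hAne, ?_⟩
  rw [hut p hp, hA]
  congr 1
  have hphi : φ (p.2 * pdx u p - 2 * u p) = -1 / (b * a) := by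
    have := hode (p.2 * pdx u p - 2 * u p)
    rw [← hbdef, ← hadef] at this
    field_simp
    linarith [this]
  rw [hphi, hAval, ← hbdef]
  field_simp
  ring
end
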